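/- arXiv:1611.03742 — 4 statements merged into one kernel-verified Lean document; each statement's English description precedes it below -/
import Mathlib

section
/- With the notation of the generalized Zermelo navigation problem (positive definite Hermitian h on ℂⁿ, wind W with 0 < ‖W‖_h < f ≤ 1, ε̃ = f² − ‖W‖_h², constant angle φ, a_{ij̄} = h_{ij̄}/ε̃ + cos²φ · W_i W̄_j / ε̃², b_i = −cos φ · W_i/ε̃), one has b^i := Σ_j a^{j̄i} b_{j̄} = (−ε̃ cos φ / (f² − ‖W‖_h² sin²φ)) · W^i, and ‖b‖² := Σ_i b_i b^i = ‖W‖_h² cos²φ / (f² − ‖W‖_h² sin²φ) < 1. -/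
open scoped ComplexOrder

/-- With `b_i = −cos φ · W_i/ε̃` and `a^{j̄i}` the inverse of the Randers metric,
one has `b^i = (−ε̃ cos φ/(f² − ‖W‖²sin²φ)) W^i` and
`‖b‖² = ‖W‖²cos²φ/(f² − ‖W‖²sin²φ) < 1`. -/
theorem randers_b_norm_lt_one {n : ℕ} (h : Matrix (Fin n) (Fin n) ℂ)
    (hposdef : h.PosDef) (W : Fin n → ℂ) (f φ : ℝ)
    (normW : ℝ) (hnormW : normW = Real.sqrt ((∑ i, ∑ j, h i j * W i * star (W j)).re))
    (hW0 : 0 < normW) (hWf : normW < f) (hf1 : f ≤ 1)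
    (ε : ℝ) (hε : ε = f ^ 2 - normW ^ 2)
    (Wl : Fin n → ℂ) (hWl : ∀ i, Wl i = ∑ j, h i j * star (W j))
    (b : Fin n → ℂ) (hb : ∀ i, b i = -(Real.cos φ : ℂ) * Wl i / (ε : ℂ))
    (ainv : Matrix (Fin n) (Fin n) ℂ)
    (hainv : ∀ j i, ainv j i = (ε : ℂ) * (h⁻¹ j i -
      (((Real.cos φ) ^ 2 / (f ^ 2 - normW ^ 2 * (Real.sin φ) ^ 2) : ℝ) : ℂ) *
        W i * star (W j)))
    (bup : Fin n → ℂ) (hbup : ∀ i, bup i = ∑ j, ainv j i * star (b j)) :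
    (∀ i, bup i =
        (((-ε * Real.cos φ / (f ^ 2 - normW ^ 2 * (Real.sin φ) ^ 2) : ℝ)) : ℂ) * W i) ∧
    (∑ i, b i * bup i) =
        (((normW ^ 2 * (Real.cos φ) ^ 2 / (f ^ 2 - normW ^ 2 * (Real.sin φ) ^ 2) : ℝ)) : ℂ) ∧
    normW ^ 2 * (Real.cos φ) ^ 2 / (f ^ 2 - normW ^ 2 * (Real.sin φ) ^ 2) < 1 := by
  have hHerm := hposdef.isHermitian
  have hsc := Real.sin_sq_add_cos_sq φ
  set D : ℝ := f ^ 2 - normW ^ 2 * Real.sin φ ^ 2 with hD_def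
  have hε0 : 0 < ε := by rw [hε]; nlinarith
  have hεD : ε ≤ D := by rw [hε]; nlinarith [sq_nonneg normW, sq_nonneg (Real.cos φ)]
  have hD0 : 0 < D := lt_of_lt_of_le hε0 hεD
  have hεC : (ε : ℂ) ≠ 0 := by exact_mod_cast hε0.ne'
  have hDC : (D : ℂ) ≠ 0 := by exact_mod_cast hD0.ne'
  -- the Hermitian norm S
  set S : ℂ := ∑ i, ∑ j, h i j * W i * star (W j) with hS_def
  have hS_nonneg : 0 ≤ S := by
    have := hposdef.posSemidef.dotProduct_mulVec_nonneg (star W)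
    convert this using 1
    simp only [dotProduct, Matrix.mulVec, star_star, hS_def, Finset.mul_sum,
      Pi.star_apply]
    exact Finset.sum_congr rfl fun i _ => Finset.sum_congr rfl fun j _ => by ring
  have hSre : 0 ≤ S.re := (Complex.nonneg_iff.1 hS_nonneg).1
  have hSim : S.im = 0 := ((Complex.nonneg_iff.1 hS_nonneg).2).symm
  have hS : S = ((normW ^ 2 : ℝ) : ℂ) := by
    apply Complex.ext
    · rw [Complex.ofReal_re, hnormW, Real.sq_sqrt hSre]
    · rw [Complex.ofReal_im, hSim]
  -- star of Wl
  have hstarWl : ∀ j, star (Wl j) = ∑ k, h k j * W k := by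
    intro j
    rw [hWl]
    rw [star_sum]
    exact Finset.sum_congr rfl fun k _ => by
      rw [star_mul', star_star, hHerm.apply]
  have hstarb : ∀ j, star (b j) = -(Real.cos φ : ℂ) * star (Wl j) / (ε : ℂ) := by
    intro j
    rw [hb]
    simp only [star_div₀, star_mul', star_neg, Complex.star_def, Complex.conj_ofReal,
      Complex.conj_conj]
  -- inverse identity
  have hinv : h * h⁻¹ = 1 := Matrix.mul_nonsing_inv h hposdef.det_pos.ne'.isUnit
  have key1 : ∀ i, (∑ j, h⁻¹ j i * star (Wl j)) = W i := by
    intro i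
    calc ∑ j, h⁻¹ j i * star (Wl j)
        = ∑ j, ∑ k, h k j * h⁻¹ j i * W k := by
          refine Finset.sum_congr rfl fun j _ => ?_
          rw [hstarWl, Finset.mul_sum]
          exact Finset.sum_congr rfl fun k _ => by ring
      _ = ∑ k, (∑ j, h k j * h⁻¹ j i) * W k := by
          rw [Finset.sum_comm]
          exact Finset.sum_congr rfl fun k _ => by rw [Finset.sum_mul]
      _ = ∑ k, (1 : Matrix (Fin n) (Fin n) ℂ) k i * W k := by
          refine Finset.sum_congr rfl fun k _ => ?_
          rw [← hinv, Matrix.mul_apply]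
      _ = W i := by simp [Matrix.one_apply]
  have key2 : (∑ j, star (W j) * star (Wl j)) = S := by
    calc ∑ j, star (W j) * star (Wl j)
        = ∑ j, ∑ k, h k j * W k * star (W j) := by
          refine Finset.sum_congr rfl fun j _ => ?_
          rw [hstarWl, Finset.mul_sum]
          exact Finset.sum_congr rfl fun k _ => by ring
      _ = S := by rw [hS_def, Finset.sum_comm]
  have key3 : (∑ i, Wl i * W i) = S := by
    calc ∑ i, Wl i * W i
        = ∑ i, ∑ j, h i j * W i * star (W j) := by
          refine Finset.sum_congr rfl fun i _ => ?_
          rw [hWl, Finset.sum_mul]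
          exact Finset.sum_congr rfl fun j _ => by ring
      _ = S := rfl
  -- part 1
  have part1 : ∀ i, bup i = ((-ε * Real.cos φ / D : ℝ) : ℂ) * W i := by
    intro i
    have expand : ∀ j, ainv j i * star (b j) =
        (-(Real.cos φ : ℂ)) * (h⁻¹ j i * star (Wl j)) +
        ((Real.cos φ : ℂ) * ((Real.cos φ ^ 2 / D : ℝ) : ℂ) * W i) *
          (star (W j) * star (Wl j)) := by
      intro j
      rw [hainv, hstarb]
      field_simp
      ring
    rw [hbup i]
    rw [Finset.sum_congr rfl fun j _ => expand j, Finset.sum_add_distrib,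
      ← Finset.mul_sum, ← Finset.mul_sum, key1, key2, hS]
    have hkey : D - Real.cos φ ^ 2 * normW ^ 2 = ε := by
      rw [hε, hD_def]; linear_combination (-normW ^ 2) * hsc
    have hreal : -(Real.cos φ) + Real.cos φ * (Real.cos φ ^ 2 / D) * normW ^ 2 =
        -ε * Real.cos φ / D := by
      rw [← hkey]; field_simp; ring
    rw [← hreal]
    push_cast
    ring
  refine ⟨part1, ?_, ?_⟩
  · have : ∀ i, b i * bup i =
        ((Real.cos φ ^ 2 / D : ℝ) : ℂ) * (Wl i * W i) := by
      intro i
      rw [hb, part1]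
      push_cast
      field_simp
    rw [Finset.sum_congr rfl fun i _ => this i, ← Finset.mul_sum, key3, hS]
    push_cast
    ring
  · rw [div_lt_one hD0]
    nlinarith
end

section
/- Let (a_{ij̄}) be a positive definite Hermitian matrix on ℂⁿ and b = (b_i) a covector with ‖b‖² := Σ a^{j̄i} b_i b_{j̄} satisfying 0 < ‖b‖² < 1. Let f > 0 and set ω̃ = f²(1 − ‖b‖²), h_{ij̄} = ω̃(a_{ij̄} − b_i b_{j̄}), and W^i = f² b^i / ω̃ where b^i = a^{j̄i} b_{j̄}. Then: (1) (h_{ij̄}) is positive definite; (2) ‖W‖_h² := Σ h_{ij̄} W^i W̄^j = f² ‖b‖², so ‖W‖_h < f; (3) ε̃ := f² − ‖W‖_h² = ω̃; and (4) W_i := Σ_j h_{ij̄} W̄^j = ω̃ b_i. -/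
open scoped ComplexOrder
open scoped Matrix

/-- Inverse construction of the generalized Zermelo navigation problem:
from Randers data `(a, b, f)` with `0 < ‖b‖² < 1`, setting
`ω̃ = f²(1 − ‖b‖²)`, `h_{ij̄} = ω̃(a_{ij̄} − b_i b̄_j)` and `W^i = f² b^i/ω̃`,
the matrix `h` is positive definite, `‖W‖²_h = f²‖b‖²` (so `‖W‖_h < f`),
`ε̃ = f² − ‖W‖²_h = ω̃` and `W_i = ω̃ b_i`. -/
theorem zermelo_inverse_construction {n : ℕ} (a : Matrix (Fin n) (Fin n) ℂ)
    (haposdef : a.PosDef) (b : Fin n → ℂ) (f : ℝ) (hf : 0 < f)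
    (nb : ℝ) (hnb : nb = (∑ i, ∑ j, a⁻¹ j i * b i * star (b j)).re)
    (hnb0 : 0 < nb) (hnb1 : nb < 1)
    (ω : ℝ) (hω : ω = f ^ 2 * (1 - nb))
    (h : Matrix (Fin n) (Fin n) ℂ)
    (hh : ∀ i j, h i j = (ω : ℂ) * (a i j - b i * star (b j)))
    (bup : Fin n → ℂ) (hbup : ∀ i, bup i = ∑ j, a⁻¹ j i * star (b j))
    (W : Fin n → ℂ) (hW : ∀ i, W i = (f ^ 2 : ℂ) * bup i / (ω : ℂ))
    (nW : ℝ) (hnW : nW = (∑ i, ∑ j, h i j * W i * star (W j)).re) :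
    h.PosDef ∧ nW = f ^ 2 * nb ∧ Real.sqrt nW < f ∧ f ^ 2 - nW = ω ∧
      ∀ i, (∑ j, h i j * star (W j)) = (ω : ℂ) * b i := by
  have haH : a.IsHermitian := haposdef.isHermitian
  have hainv : (a⁻¹).IsHermitian := haH.inv
  have hdet : IsUnit a.det := (Matrix.isUnit_iff_isUnit_det a).mp haposdef.isUnit
  have hMul : a * a⁻¹ = 1 := Matrix.mul_nonsing_inv a hdet
  set c : Fin n → ℂ := a⁻¹ *ᵥ b with hc
  have hac : a *ᵥ c = b := by
    rw [hc, Matrix.mulVec_mulVec, hMul, Matrix.one_mulVec]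
  have hb0 : b ≠ 0 := by
    intro hb
    rw [hb] at hnb
    simp at hnb
    exact absurd (hnb ▸ hnb0) (lt_irrefl 0)
  have hs : 0 < dotProduct (star b) (a⁻¹ *ᵥ b) := haposdef.inv.dotProduct_mulVec_pos hb0
  have hsum : (∑ i, ∑ j, a⁻¹ j i * b i * star (b j))
      = dotProduct (star b) c := by
    rw [Finset.sum_comm]
    simp only [dotProduct, Matrix.mulVec, Pi.star_apply, hc, Finset.mul_sum]
    exact Finset.sum_congr rfl fun j _ => Finset.sum_congr rfl fun i _ => by ring
  have hsC : dotProduct (star b) c = (nb : ℂ) := by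
    have hlt := Complex.lt_def.mp hs
    apply Complex.ext
    · rw [hnb, hsum]; simp
    · simpa using hlt.2.symm
  have hω0 : (0:ℝ) < ω := by
    have h1 : 0 < 1 - nb := by linarith
    rw [hω]; positivity
  have hωC : (ω : ℂ) ≠ 0 := by exact_mod_cast hω0.ne'
  have hbupc : ∀ j, bup j = star (c j) := by
    intro j
    rw [hbup]
    simp only [hc, Matrix.mulVec, dotProduct, star_sum, star_mul']
    exact Finset.sum_congr rfl fun i _ => by rw [hainv.apply i j]
  have hstarW : ∀ j, star (W j) = (f ^ 2 : ℂ) * c j / (ω : ℂ) := by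
    intro j
    rw [hW, hbupc]
    simp [star_div₀, star_star]
  -- statement (4)
  have key4 : ∀ i, (∑ j, h i j * star (W j)) = (ω : ℂ) * b i := by
    intro i
    have step1 : (∑ j, h i j * star (W j))
        = ∑ j, ((f ^ 2 : ℂ) * (a i j * c j)
            - (f ^ 2 : ℂ) * (b i * (star (b j) * c j))) := by
      refine Finset.sum_congr rfl fun j _ => ?_
      rw [hh, hstarW]
      field_simp
    rw [step1, Finset.sum_sub_distrib, ← Finset.mul_sum, ← Finset.mul_sum]
    have h1 : (∑ j, a i j * c j) = b i := by
      rw [← hac]; rfl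
    have h2 : (∑ j, b i * (star (b j) * c j)) = b i * (nb : ℂ) := by
      rw [← Finset.mul_sum, ← hsC]
      rfl
    rw [h1, h2, hω]
    push_cast
    ring
  -- ‖W‖² computation
  have hsumW : (∑ i, ∑ j, h i j * W i * star (W j)) = ((f ^ 2 * nb : ℝ) : ℂ) := by
    have step1 : ∀ i, (∑ j, h i j * W i * star (W j))
        = W i * ((ω : ℂ) * b i) := by
      intro i
      rw [← key4 i, Finset.mul_sum]
      exact Finset.sum_congr rfl fun j _ => by ring
    calc (∑ i, ∑ j, h i j * W i * star (W j))
        = ∑ i, W i * ((ω : ℂ) * b i) := Finset.sum_congr rfl fun i _ => step1 i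
      _ = (f ^ 2 : ℂ) * ∑ i, star (c i) * b i := by
          rw [Finset.mul_sum]
          refine Finset.sum_congr rfl fun i _ => ?_
          rw [hW, hbupc]
          field_simp
      _ = (f ^ 2 : ℂ) * star (dotProduct (star b) c) := by
          congr 1
          rw [dotProduct, star_sum]
          exact Finset.sum_congr rfl fun i _ => by simp [mul_comm]
      _ = ((f ^ 2 * nb : ℝ) : ℂ) := by
          rw [hsC]
          push_cast
          simp
  have hnW' : nW = f ^ 2 * nb := by
    rw [hnW, hsumW, Complex.ofReal_re]
  -- Positive definiteness of h
  have hcs : ∀ z : Fin n → ℂ,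
      dotProduct (star c) (a *ᵥ z) = dotProduct (star b) z := by
    intro z
    rw [Matrix.dotProduct_mulVec]
    congr 1
    rw [← haH.eq, ← Matrix.star_mulVec, hac]
  have hposdef : h.PosDef := by
    refine Matrix.PosDef.of_dotProduct_mulVec_pos ?_ ?_
    · -- Hermitian
      ext i j
      rw [Matrix.conjTranspose_apply, hh, hh]
      rw [star_mul', star_sub, star_mul', star_star, haH.apply i j]
      simp only [Complex.star_def, Complex.conj_ofReal]
      ring
    · intro x hx
      set X := dotProduct (star x) (a *ᵥ x) with hX
      set t := dotProduct (star b) x with ht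
      have hXpos : 0 < X := haposdef.dotProduct_mulVec_pos hx
      have hXlt := Complex.lt_def.mp hXpos
      have hXre : 0 < X.re := by simpa using hXlt.1
      have hXim : X.im = 0 := by simpa using hXlt.2.symm
      -- value of the quadratic form of h
      have hform : dotProduct (star x) (h *ᵥ x)
          = (ω : ℂ) * (X - (Complex.normSq t : ℂ)) := by
        have hsxB : dotProduct (star x) b = star t := by
          rw [ht, dotProduct, dotProduct, star_sum]
          exact Finset.sum_congr rfl fun i _ => by simp [mul_comm]
        have houter : Matrix.vecMulVec b (star b) *ᵥ x = (dotProduct (star b) x) • b := by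
          ext i
          simp only [Matrix.mulVec, dotProduct, Matrix.vecMulVec_apply,
            Pi.smul_apply, smul_eq_mul, Pi.star_apply]
          rw [Finset.sum_mul]
          exact Finset.sum_congr rfl fun j _ => by ring
        have hhm : h = (ω : ℂ) • (a - Matrix.vecMulVec b (star b)) := by
          ext i j
          simp only [hh, Matrix.smul_apply, Matrix.sub_apply, Matrix.vecMulVec_apply,
            smul_eq_mul, Pi.star_apply]
        have expand : dotProduct (star x) (h *ᵥ x)
            = (ω : ℂ) * (X - (dotProduct (star x) b) * t) := by
          rw [hhm, Matrix.smul_mulVec, dotProduct_smul, Matrix.sub_mulVec,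
            dotProduct_sub, houter, dotProduct_smul, ← ht, ← hX,
            smul_eq_mul, smul_eq_mul, mul_comm t]
        rw [expand, hsxB]
        congr 2
        rw [Complex.star_def, ← Complex.normSq_eq_conj_mul_self]
      -- Cauchy-Schwarz via positive semidefiniteness
      have hCS : Complex.normSq t ≤ nb * X.re := by
        set y : Fin n → ℂ := (nb : ℂ) • x - t • c with hy
        have hQ : 0 ≤ dotProduct (star y) (a *ᵥ y) :=
          haposdef.posSemidef.dotProduct_mulVec_nonneg y
        have hay : a *ᵥ y = (nb : ℂ) • (a *ᵥ x) - t • b := by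
          rw [hy, Matrix.mulVec_sub, Matrix.mulVec_smul, Matrix.mulVec_smul, hac]
        have hstary : star y = (nb : ℂ) • star x - star t • star c := by
          rw [hy]
          simp [star_smul]
        have hQval : dotProduct (star y) (a *ᵥ y)
            = (nb : ℂ) * ((nb : ℂ) * X - (Complex.normSq t : ℂ)) := by
          rw [hstary, hay]
          rw [sub_dotProduct, dotProduct_sub, dotProduct_sub,
            smul_dotProduct, smul_dotProduct, smul_dotProduct,
            smul_dotProduct, dotProduct_smul, dotProduct_smul,
            dotProduct_smul, dotProduct_smul]
          have e1 : dotProduct (star x) b = star t := by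
            rw [ht, dotProduct, dotProduct, star_sum]
            exact Finset.sum_congr rfl fun i _ => by simp [mul_comm]
          have e2 : dotProduct (star c) (a *ᵥ x) = t := by
            rw [hcs x, ht]
          have e3 : dotProduct (star c) b = (nb : ℂ) := by
            rw [← hac, hcs c, hsC]
          rw [e1, e2, e3, ← hX]
          have e4 : t * star t = (Complex.normSq t : ℂ) := by
            rw [Complex.star_def, Complex.mul_conj]
          simp only [smul_eq_mul]
          linear_combination (-(nb : ℂ)) * e4
        rw [hQval] at hQ
        have hQre := (Complex.le_def.mp hQ).1
        simp only [Complex.zero_re, Complex.mul_re, Complex.ofReal_re,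
          Complex.ofReal_im, Complex.sub_re, Complex.sub_im, Complex.mul_im,
          hXim] at hQre
        nlinarith [hQre]
      rw [hform]
      rw [Complex.lt_def]
      constructor
      · simp only [Complex.zero_re, Complex.mul_re, Complex.ofReal_re,
          Complex.ofReal_im, Complex.sub_re, Complex.ofReal_im, hXim]
        have : Complex.normSq t < X.re := lt_of_le_of_lt hCS (by nlinarith)
        simp [hXim]
        nlinarith
      · simp [hXim]
  refine ⟨hposdef, hnW', ?_, ?_, key4⟩
  · rw [hnW', Real.sqrt_lt' hf]
    nlinarith
  · rw [hnW', hω]; ring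
end

section
/- Let h be a Hermitian inner product on ℂⁿ, W ∈ ℂⁿ with ‖W‖_h < f, ε̃ = f² − ‖W‖_h², and suppose h(η, W̄) is a nonpositive real number for some η (i.e. cos φ = −1). Then the Zermelo solution F(η) = (√((Re h(η, W̄))² + ‖η‖_h² ε̃) − Re h(η, W̄))/ε̃ equals α(η) + |β(η)| where α(η) = √(‖η‖_h²/ε̃ + |h(η, W̄)|²/ε̃²) and β(η) = h(η, W̄)/ε̃. -/
/-- When `h(η,W̄)` is a nonpositive real number (`cos φ = −1`), the Zermelo
solution decomposes in complex Randers form `F = α + |β|` with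
`α(η) = √(‖η‖²/ε̃ + |h(η,W̄)|²/ε̃²)` and `β(η) = h(η,W̄)/ε̃`. -/
theorem zermelo_randers_decomposition {E : Type*} [NormedAddCommGroup E]
    [InnerProductSpace ℂ E] (W : E) (f ε : ℝ)
    (hWf : ‖W‖ < f) (hε : ε = f ^ 2 - ‖W‖ ^ 2) (hε0 : 0 < ε) (F : E → ℝ)
    (hF : ∀ η, F η =
      (Real.sqrt (((inner ℂ W η : ℂ).re) ^ 2 + ‖η‖ ^ 2 * ε) - (inner ℂ W η : ℂ).re) / ε)
    (η : E)
    (hreal : (inner ℂ W η : ℂ).im = 0 ∧ (inner ℂ W η : ℂ).re ≤ 0) :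
    F η = Real.sqrt (‖η‖ ^ 2 / ε + (‖(inner ℂ W η : ℂ)‖) ^ 2 / ε ^ 2) +
      ‖(inner ℂ W η : ℂ) / (ε : ℂ)‖ := by
  obtain ⟨him, hre⟩ := hreal
  have hz : (inner ℂ W η : ℂ) = ((inner ℂ W η : ℂ).re : ℂ) := Complex.ext rfl (by simp [him])
  rw [hF, hz, Complex.norm_real, norm_div, Complex.norm_real, Complex.norm_real]
  simp only [Real.norm_eq_abs]
  set r := (inner ℂ W η : ℂ).re with hr
  have habs : |r| = -r := abs_of_nonpos hre
  have hεabs : |ε| = ε := abs_of_pos hε0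
  have h1 : ‖η‖ ^ 2 / ε + |r| ^ 2 / ε ^ 2 = (r ^ 2 + ‖η‖ ^ 2 * ε) / ε ^ 2 := by
    rw [habs]; field_simp; ring
  have hnum : 0 ≤ r ^ 2 + ‖η‖ ^ 2 * ε := by positivity
  rw [h1, Real.sqrt_div hnum, Real.sqrt_sq hε0.le, habs, hεabs]
  simp only [Complex.ofReal_re]
  ring
end

section
/- The real function γ²(t) = λ(μ e^{2λkt} − 1)/(μ e^{2λkt} + 1), with real constants λ ≠ 0, μ > 0, k, satisfies the ODE γ̈² + 2γ²(γ̇²)²/(λ² − (γ²)²) = 0, and also γ̇² = k(λ² − (γ²)²). -/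
/-- The function `γ²(t) = λ(μ e^{2λkt} − 1)/(μ e^{2λkt} + 1)` satisfies
`γ̇² = k(λ² − (γ²)²)` and the geodesic ODE
`γ̈² + 2γ²(γ̇²)²/(λ² − (γ²)²) = 0`. -/
theorem hartogs_geodesic_ode (lam mu k : ℝ) (hlam : lam ≠ 0) (hmu : 0 < mu)
    (γ : ℝ → ℝ)
    (hγ : ∀ t, γ t = lam * (mu * Real.exp (2 * lam * k * t) - 1) /
      (mu * Real.exp (2 * lam * k * t) + 1)) :
    (∀ t, deriv γ t = k * (lam ^ 2 - (γ t) ^ 2)) ∧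
    (∀ t, deriv (deriv γ) t +
      2 * γ t * (deriv γ t) ^ 2 / (lam ^ 2 - (γ t) ^ 2) = 0) := by
  have hγf : γ = fun t => lam * (mu * Real.exp (2 * lam * k * t) - 1) /
      (mu * Real.exp (2 * lam * k * t) + 1) := funext hγ
  subst hγf
  set γ : ℝ → ℝ := fun t => lam * (mu * Real.exp (2 * lam * k * t) - 1) /
      (mu * Real.exp (2 * lam * k * t) + 1) with hγdef
  have hD : ∀ t, mu * Real.exp (2 * lam * k * t) + 1 ≠ 0 := by
    intro t; positivity
  have key : ∀ t, HasDerivAt γ (k * (lam ^ 2 - γ t ^ 2)) t := by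
    intro t
    have h1 : HasDerivAt (fun t : ℝ => 2 * lam * k * t) (2 * lam * k) t := by
      simpa using (hasDerivAt_id t).const_mul (2 * lam * k)
    have h2 := h1.exp
    have hE : HasDerivAt (fun t : ℝ => mu * Real.exp (2 * lam * k * t))
        (mu * (Real.exp (2 * lam * k * t) * (2 * lam * k))) t := h2.const_mul mu
    have hN := (hE.sub_const 1).const_mul lam
    have hDd := hE.add_const 1
    have h := hN.div hDd (hD t)
    refine h.congr_deriv ?_
    have hDt := hD t
    simp only [hγdef]
    field_simp
    ring
  have hd1 : ∀ t, deriv γ t = k * (lam ^ 2 - γ t ^ 2) := fun t => (key t).deriv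
  refine ⟨hd1, fun t => ?_⟩
  have hne : lam ^ 2 - γ t ^ 2 ≠ 0 := by
    have : lam ^ 2 - γ t ^ 2 = 4 * lam ^ 2 * (mu * Real.exp (2 * lam * k * t)) /
        (mu * Real.exp (2 * lam * k * t) + 1) ^ 2 := by
      have hDt := hD t
      simp only [hγdef]
      field_simp
      ring
    rw [this]
    positivity
  have hderiv : deriv γ = fun t => k * (lam ^ 2 - γ t ^ 2) := funext hd1
  have key2 : HasDerivAt (deriv γ) (k * (-(2 * γ t * (k * (lam ^ 2 - γ t ^ 2))))) t := by
    rw [hderiv]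
    have := ((key t).pow 2).const_sub (lam ^ 2)
    have h2 := this.const_mul k
    refine h2.congr_deriv ?_
    ring
  rw [key2.deriv, hd1]
  field_simp
  ring
end
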